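/- arXiv:0906.2995 — 5 statements merged into one kernel-verified Lean document; each statement's English description precedes it below -/
import Mathlib

section
/- Let Γ be a finite alphabet with at least two letters. The space Γ^∞ of finite and infinite words over Γ, equipped with the alphabetic topology (generated by basic open sets of the form uA^∞ for u ∈ Γ* and A ⊆ Γ), is not compact. -/
namespace InfWords

variable {Γ : Type}

/-- Finite and infinite words over `Γ`: `Γ^∞ = Γ* ∪ Γ^ω`. -/
abbrev Word (Γ : Type) := List Γ ⊕ (ℕ → Γ)

/-- Prepend a finite word to a finite or infinite word. -/
def wappend (u : List Γ) : Word Γ → Word Γ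
  | Sum.inl v => Sum.inl (u ++ v)
  | Sum.inr f => Sum.inr fun n => if h : n < u.length then u.get ⟨n, h⟩ else f (n - u.length)

/-- The set of finite words `Γ*` inside `Γ^∞`. -/
def finWords (Γ : Type) : Set (Word Γ) := Set.range Sum.inl

/-- The set of infinite words `Γ^ω` inside `Γ^∞`. -/
def infWords (Γ : Type) : Set (Word Γ) := Set.range Sum.inr

/-- The alphabet of a word: the letters occurring in it. -/
def alph : Word Γ → Set Γ
  | Sum.inl u => {a | a ∈ u}
  | Sum.inr f => {a | ∃ n, f n = a}

/-- The imaginary part: letters occurring infinitely often. -/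
def im : Word Γ → Set Γ
  | Sum.inl _ => ∅
  | Sum.inr f => {a | ∀ n, ∃ m, n ≤ m ∧ f m = a}

/-- `A^∞`: words all of whose letters lie in `A`. -/
def infin (A : Set Γ) : Set (Word Γ) := {α | alph α ⊆ A}

/-- The basic set `u A^∞` of the alphabetic topology. -/
def cone (u : List Γ) (A : Set Γ) : Set (Word Γ) := wappend u '' infin A

/-- The alphabetic topology on `Γ^∞`, generated by the sets `u A^∞`. -/
instance alphTop : TopologicalSpace (Word Γ) :=
  TopologicalSpace.generateFrom {S | ∃ u A, S = cone u A}

/-- `cpx A`: words with `alph = im = A`. -/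
def cpx (A : Set Γ) : Set (Word Γ) := {β | alph β = A ∧ im β = A}

/-- The strict alphabetic topology, generated by the sets `u · cpx A`. -/
def strictTopo (Γ : Type) : TopologicalSpace (Word Γ) :=
  TopologicalSpace.generateFrom {S | ∃ u A, S = wappend u '' cpx A}

/-- `u` is a finite prefix of the word `α`. -/
def IsPre (u : List Γ) : Word Γ → Prop
  | Sum.inl v => u <+: v
  | Sum.inr f => ∀ i : Fin u.length, u.get i = f i.1

/-- The arrow language `→W`: every prefix extends to a prefix lying in `W`. -/
def arrow (W : Set (List Γ)) : Set (Word Γ) :=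
  {α | ∀ u, IsPre u α → ∃ v, IsPre (u ++ v) α ∧ u ++ v ∈ W}

/-- The right quotient `L / A^∞`. -/
def quotInf (L : Set (Word Γ)) (A : Set Γ) : Set (List Γ) :=
  {u | ∃ β ∈ infin A, wappend u β ∈ L}

/-- `A^im`: words whose set of letters occurring infinitely often is exactly `A`. -/
def imSet (A : Set Γ) : Set (Word Γ) := {α | im α = A}

/-- `z^ω`, with the convention `1^ω = 1`. -/
def omegaPow : List Γ → Word Γ
  | [] => Sum.inl []
  | a :: l => Sum.inr fun n => (a :: l).get ⟨n % (a :: l).length, Nat.mod_lt n (Nat.succ_pos _)⟩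

/-- The partial products `u v₀ v₁ ⋯ v_{n-1}`. -/
def partialProd (u : List Γ) (v : ℕ → List Γ) (n : ℕ) : List Γ :=
  u ++ ((List.range n).map v).flatten

/-- `α` is the (finite or infinite) product `u v₀ v₁ v₂ ⋯`, with convention `1^ω = 1`. -/
def IsInfProd (u : List Γ) (v : ℕ → List Γ) : Word Γ → Prop
  | Sum.inl w => (∀ n, partialProd u v n <+: w) ∧ ∃ n, partialProd u v n = w
  | Sum.inr f => (∀ n, IsPre (partialProd u v n) (Sum.inr f)) ∧
      ∀ k, ∃ n, k < (partialProd u v n).length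

/-- `h : Γ* → M` is a monoid homomorphism. -/
structure IsHom {M : Type} [Monoid M] (h : List Γ → M) : Prop where
  map_one : h [] = 1
  map_mul : ∀ u v, h (u ++ v) = h u * h v

/-- `[s][e]^ω`: products `u v₀ v₁ ⋯` with `h u = s` and `h vᵢ = e`. -/
def pairSet {M : Type} (h : List Γ → M) (s e : M) : Set (Word Γ) :=
  {α | ∃ u v, h u = s ∧ (∀ i, h (v i) = e) ∧ IsInfProd u v α}

/-- `(s, e)` is a linked pair. -/
def LinkedPair {M : Type} [Monoid M] (s e : M) : Prop := s * e = s ∧ e * e = e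

/-- `h` strongly recognizes `L`. -/
def StronglyRecognizes {M : Type} [Monoid M] (h : List Γ → M) (L : Set (Word Γ)) : Prop :=
  L = ⋃ (s : M) (e : M) (_ : LinkedPair s e ∧ (pairSet h s e ∩ L).Nonempty), pairSet h s e

/-- `L` is regular: strongly recognized by a surjective homomorphism onto a finite monoid. -/
def Regular (L : Set (Word Γ)) : Prop :=
  ∃ (M : Type) (i : Monoid M), Finite M ∧
    ∃ h : List Γ → M, @IsHom Γ M i h ∧ Function.Surjective h ∧ @StronglyRecognizes Γ M i h L

/-- `L` is deterministic. -/
def Deterministic (L : Set (Word Γ)) : Prop :=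
  Regular L ∧ ∃ W : Set (List Γ), L ∩ infWords Γ = arrow W ∩ infWords Γ

/-- The syntactic preorder `u ≤_L v`. -/
def synLe (L : Set (Word Γ)) (u v : List Γ) : Prop :=
  ∀ x y z : List Γ,
    (wappend (x ++ v ++ y) (omegaPow z) ∈ L → wappend (x ++ u ++ y) (omegaPow z) ∈ L) ∧
    (wappend x (omegaPow (v ++ y)) ∈ L → wappend x (omegaPow (u ++ y)) ∈ L)

/-- The syntactic congruence `u ≡_L v`. -/
def synEq (L : Set (Word Γ)) (u v : List Γ) : Prop := synLe L u v ∧ synLe L v u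

/-- `[s][e]^ω` for syntactic classes represented by words `s`, `e`. -/
def pairSetSyn (L : Set (Word Γ)) (s e : List Γ) : Set (Word Γ) :=
  {α | ∃ u v, synEq L u s ∧ (∀ i, synEq L (v i) e) ∧ IsInfProd u v α}

/-- `s` represents an element of `M_e` in the syntactic monoid of `L`:
`s` is a product of words each of which is a factor of (something equivalent to) `e`. -/
def InMe (L : Set (Word Γ)) (e s : List Γ) : Prop :=
  ∃ parts : List (List Γ), s = parts.flatten ∧ ∀ p ∈ parts, ∃ x y, synEq L (x ++ p ++ y) e

/-- Glue a factorization `u₁ a₁ u₂ a₂ ⋯ u_k a_k` into a single finite word. -/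
def glue : List (List Γ) → List (Set Γ × Γ) → List Γ
  | x :: xs, p :: l => x ++ p.2 :: glue xs l
  | _, _ => []

/-- `(us, β)` is a factorization of `α` as `u₁ a₁ ⋯ u_k a_k β` with `uᵢ ∈ Aᵢ*`, `β ∈ B^∞`. -/
def IsFactorization (l : List (Set Γ × Γ)) (B : Set Γ) (us : List (List Γ)) (β : Word Γ)
    (α : Word Γ) : Prop :=
  us.length = l.length ∧
  (∀ (i : ℕ) (h1 : i < us.length) (h2 : i < l.length),
    ∀ c ∈ us.get ⟨i, h1⟩, c ∈ (l.get ⟨i, h2⟩).1) ∧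
  β ∈ infin B ∧ α = wappend (glue us l) β

/-- The monomial `A₁* a₁ ⋯ A_k* a_k B^∞`. -/
def monomial (l : List (Set Γ × Γ)) (B : Set Γ) : Set (Word Γ) :=
  {α | ∃ us β, IsFactorization l B us β α}

/-- The monomial given by `(l, B)` is unambiguous. -/
def Unambiguous (l : List (Set Γ × Γ)) (B : Set Γ) : Prop :=
  ∀ α us β us' β', IsFactorization l B us β α → IsFactorization l B us' β' α →
    us = us' ∧ β = β'

/-- `L` is a polynomial: a finite union of monomials. -/
def IsPolynomial (L : Set (Word Γ)) : Prop :=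
  ∃ ms : List (List (Set Γ × Γ) × Set Γ), L = {α | ∃ m ∈ ms, α ∈ monomial m.1 m.2}

/-- The set of marker letters of a monomial. -/
def sndSet (l : List (Set Γ × Γ)) : Set Γ := {a | ∃ p ∈ l, p.2 = a}

/-- `M_e`: the submonoid generated by the factors of the idempotent `e`. -/
def Msub {M : Type} [Monoid M] (e : M) : Submonoid M :=
  Submonoid.closure {t | ∃ x y, x * t * y = e}

/-- The variety `DA`: `ese = e` for all idempotents `e` and all `s ∈ M_e`. -/
def IsDA (M : Type) [Monoid M] : Prop :=
  ∀ e : M, e * e = e → ∀ s ∈ Msub e, e * s * e = e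

end InfWords
section Aux
open InfWords Filter Topology

variable {Γ : Type}

lemma isOpen_cone (u : List Γ) (A : Set Γ) : IsOpen (cone u A) :=
  TopologicalSpace.isOpen_generateFrom_of_mem ⟨u, A, rfl⟩

lemma wappend_nil (α : Word Γ) : wappend [] α = α := by
  cases α with
  | inl v => simp [wappend]
  | inr f => simp [wappend]

lemma mem_cone_inl {u : List Γ} {A : Set Γ} {w : List Γ}
    (h : (Sum.inl w : Word Γ) ∈ cone u A) :
    ∃ v, u ++ v = w ∧ ∀ x ∈ v, x ∈ A := by
  obtain ⟨β, hβA, hβ⟩ := h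
  cases β with
  | inl v =>
    refine ⟨v, ?_, fun x hx => hβA hx⟩
    simpa [wappend] using hβ
  | inr f => simp [wappend] at hβ

theorem gamma_infty_not_compact' (Γ : Type) [Fintype Γ]
    (hcard : 2 ≤ Fintype.card Γ) :
    ¬ CompactSpace (InfWords.Word Γ) := by
  intro hc
  obtain ⟨a, b, hab⟩ := Fintype.exists_pair_of_one_lt_card hcard
  set c : ℕ → Word Γ := fun n => Sum.inl (List.replicate n a ++ [b]) with hcdef
  obtain ⟨x, hx⟩ := exists_clusterPt_of_compactSpace (Filter.map c atTop)
  have hfreq : ∀ U ∈ 𝓝 x, ∃ᶠ n in atTop, c n ∈ U :=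
    mapClusterPt_iff_frequently.mp hx
  cases x with
  | inl w =>
    -- finite words are isolated
    have hU : (Sum.inl w : Word Γ) ∈ cone w (∅ : Set Γ) := by
      refine ⟨Sum.inl [], ?_, by simp [wappend]⟩
      intro x hx
      simp [alph] at hx
    have hmem := hfreq _ ((isOpen_cone w ∅).mem_nhds hU)
    have key : ∀ n, c n ∈ cone w (∅ : Set Γ) → w.length = n + 1 := by
      intro n hn
      obtain ⟨v, hv, hvA⟩ := mem_cone_inl hn
      have hv0 : v = [] := by
        cases v with
        | nil => rfl
        | cons y ys => exact absurd (hvA y (by simp)) (by simp)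
      subst hv0
      simp at hv
      have := congrArg List.length hv
      simpa using this
    obtain ⟨n₁, hn₁⟩ := hmem.exists
    obtain ⟨n₂, hn₂, hn₂le⟩ := (hmem.and_eventually (eventually_ge_atTop (n₁ + 1))).exists
    have e1 := key n₁ hn₁
    have e2 := key n₂ hn₂
    omega
  | inr f =>
    by_cases hconst : ∀ m, f m = a
    · -- x = a^ω, separated by {a}^∞
      have hU : (Sum.inr f : Word Γ) ∈ cone [] ({a} : Set Γ) := by
        refine ⟨Sum.inr f, ?_, wappend_nil _⟩
        intro x hx
        obtain ⟨n, hn⟩ := hx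
        simp [← hn, hconst n]
      obtain ⟨n, hn⟩ := (hfreq _ ((isOpen_cone [] {a}).mem_nhds hU)).exists
      obtain ⟨v, hv, hvA⟩ := mem_cone_inl hn
      simp at hv
      have : b ∈ ({a} : Set Γ) := hvA b (by rw [hv]; simp)
      exact hab (by simpa using this.symm)
    · push_neg at hconst
      obtain ⟨m, hm⟩ := hconst
      set u : List Γ := (List.range (m + 2)).map f with hudef
      have hulen : u.length = m + 2 := by simp [hudef]
      have hU : (Sum.inr f : Word Γ) ∈ cone u (Set.univ : Set Γ) := by
        refine ⟨Sum.inr (fun k => f (k + (m + 2))), fun x _ => trivial, ?_⟩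
        simp only [wappend]
        congr 1
        funext n
        split
        · next h =>
          simp [hudef]
        · next h =>
          rw [hulen] at h ⊢
          rw [Nat.sub_add_cancel (Nat.le_of_not_lt h)]
      obtain ⟨n, hn⟩ := (hfreq _ ((isOpen_cone u Set.univ).mem_nhds hU)).exists
      obtain ⟨v, hv, -⟩ := mem_cone_inl hn
      have hlen := congrArg List.length hv
      simp [hulen] at hlen
      have hmn : m < n := by omega
      have hml : m < (u ++ v).length := by
        simp [hulen]; omega
      have := congrArg (fun l => l[m]?) hv
      rw [List.getElem?_append_left (by omega), List.getElem?_append_left (by simpa using hmn)] at this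
      rw [List.getElem?_eq_getElem (by omega), List.getElem?_eq_getElem (by simpa using hmn)] at this
      simp [hudef] at this
      exact hm this
end Aux

theorem gamma_infty_not_compact (Γ : Type) [Fintype Γ]
    (hcard : 2 ≤ Fintype.card Γ) :
    ¬ CompactSpace (InfWords.Word Γ) :=
  gamma_infty_not_compact' Γ hcard
end

section
/- The space Γ^∞ with the alphabetic topology is Hausdorff. -/
namespace InfWordsT2

open InfWords

variable {Γ : Type}

lemma cone_open (u : List Γ) (A : Set Γ) : IsOpen (cone u A) :=
  TopologicalSpace.GenerateOpen.basic _ ⟨u, A, rfl⟩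

lemma cone_empty (u : List Γ) : cone u (∅ : Set Γ) = {Sum.inl u} := by
  ext α
  constructor
  · rintro ⟨β, hβ, rfl⟩
    cases β with
    | inl v =>
      have hv : v = [] := by
        cases v with
        | nil => rfl
        | cons a l =>
          exact absurd (hβ (show a ∈ alph (Sum.inl (a :: l)) from List.mem_cons_self))
            (Set.notMem_empty a)
      subst hv
      simp [wappend]
    | inr f => exact absurd (hβ ⟨0, rfl⟩) (Set.notMem_empty _)
  · rintro rfl
    refine ⟨Sum.inl [], ?_, by simp [wappend]⟩
    intro a ha
    simp [alph] at ha

/-- letter at position `n` of a word -/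
def letterAt : Word Γ → ℕ → Option Γ
  | Sum.inl w, n => w[n]?
  | Sum.inr f, n => some (f n)

lemma letterAt_cone {u : List Γ} {α : Word Γ} (h : α ∈ cone u Set.univ)
    {i : ℕ} (hi : i < u.length) : letterAt α i = some u[i] := by
  obtain ⟨β, -, rfl⟩ := h
  cases β with
  | inl v =>
    simp only [wappend, letterAt]
    rw [List.getElem?_append_left hi, List.getElem?_eq_getElem hi]
  | inr f =>
    simp [wappend, letterAt, hi]

lemma inr_mem_cone (f : ℕ → Γ) (n : ℕ) :
    Sum.inr f ∈ cone ((List.range n).map f) Set.univ := by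
  refine ⟨Sum.inr (fun k => f (k + n)), fun _ _ => trivial, ?_⟩
  simp only [wappend]
  congr 1
  funext m
  by_cases h : m < ((List.range n).map f).length
  · rw [dif_pos h]
    have hm : m < n := by simpa using h
    simp [List.get_eq_getElem, List.getElem_map, List.getElem_range]
  · rw [dif_neg h]
    have hm : n ≤ m := by simpa using h
    simp only [List.length_map, List.length_range]
    rw [Nat.sub_add_cancel hm]

lemma pre_getElem (f : ℕ → Γ) (n i : ℕ) (hi : i < ((List.range n).map f).length) :
    ((List.range n).map f)[i] = f i := by
  have hi' : i < n := by simpa using hi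
  simp [List.getElem_map, List.getElem_range]

end InfWordsT2

open InfWords InfWordsT2 in
theorem gamma_infty_t2 (Γ : Type) [Fintype Γ] :
    T2Space (InfWords.Word Γ) := by
  constructor
  intro x y hxy
  cases x with
  | inl u =>
    cases y with
    | inl v =>
      refine ⟨cone u ∅, cone v ∅, cone_open u ∅, cone_open v ∅, ?_, ?_, ?_⟩
      · rw [cone_empty]; rfl
      · rw [cone_empty]; rfl
      · rw [cone_empty, cone_empty]
        simp only [Set.disjoint_singleton]
        intro h; exact hxy (congrArg Sum.inl (Sum.inl.injEq u v ▸ h))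
    | inr f =>
      set w : List Γ := (List.range (u.length + 1)).map f with hw
      refine ⟨cone u ∅, cone w Set.univ, cone_open u ∅, cone_open w Set.univ, ?_, ?_, ?_⟩
      · rw [cone_empty]; rfl
      · exact inr_mem_cone f (u.length + 1)
      · rw [cone_empty, Set.disjoint_singleton_left]
        intro hmem
        have hlen : u.length < w.length := by simp [hw]
        have := letterAt_cone hmem hlen
        simp [letterAt, List.getElem?_eq_none (le_refl u.length)] at this
  | inr f =>
    cases y with
    | inl v =>
      set w : List Γ := (List.range (v.length + 1)).map f with hw
      refine ⟨cone w Set.univ, cone v ∅, cone_open w Set.univ, cone_open v ∅, ?_, ?_, ?_⟩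
      · exact inr_mem_cone f (v.length + 1)
      · rw [cone_empty]; rfl
      · rw [cone_empty, Set.disjoint_singleton_right]
        intro hmem
        have hlen : v.length < w.length := by simp [hw]
        have := letterAt_cone hmem hlen
        simp [letterAt, List.getElem?_eq_none (le_refl v.length)] at this
    | inr g =>
      have hfg : f ≠ g := fun h => hxy (congrArg Sum.inr h)
      obtain ⟨n, hn⟩ : ∃ n, f n ≠ g n := by
        by_contra h
        push_neg at h
        exact hfg (funext h)
      set wf : List Γ := (List.range (n + 1)).map f with hwf
      set wg : List Γ := (List.range (n + 1)).map g with hwg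
      refine ⟨cone wf Set.univ, cone wg Set.univ, cone_open _ _, cone_open _ _,
        inr_mem_cone f (n + 1), inr_mem_cone g (n + 1), ?_⟩
      rw [Set.disjoint_left]
      intro α hαf hαg
      have hlf : n < wf.length := by simp [hwf]
      have hlg : n < wg.length := by simp [hwg]
      have h1 := letterAt_cone hαf hlf
      have h2 := letterAt_cone hαg hlg
      rw [pre_getElem f (n+1) n hlf] at h1
      rw [pre_getElem g (n+1) n hlg] at h2
      rw [h1] at h2
      exact hn (Option.some_injective _ h2)
end

section
/- In the alphabetic topology on Γ^∞, the closure of A^im equals the union of all B^im over supersets B ⊇ A, i.e., closure(A^im) = ⋃_{A ⊆ B ⊆ Γ} B^im. -/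
namespace InfWords

variable {Γ : Type}

/-- The prefix of length `n` of a word. -/
def pref : Word Γ → ℕ → List Γ
  | Sum.inl w, n => w.take n
  | Sum.inr f, n => (List.range n).map f

lemma wappend_wappend (u v : List Γ) (β : Word Γ) :
    wappend (u ++ v) β = wappend u (wappend v β) := by
  cases β with
  | inl w => simp [wappend]
  | inr f =>
    simp only [wappend]
    congr 1; funext n
    rcases lt_or_ge n u.length with h1 | h1
    · rw [dif_pos h1, dif_pos (show n < (u ++ v).length by simp; omega)]
      simp only [List.get_eq_getElem]
      exact List.getElem_append_left h1
    · rw [dif_neg (show ¬ n < u.length by omega)]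
      rcases lt_or_ge (n - u.length) v.length with h2 | h2
      · rw [dif_pos h2, dif_pos (show n < (u ++ v).length by simp; omega)]
        simp only [List.get_eq_getElem]
        rw [List.getElem_append_right h1]
      · rw [dif_neg (show ¬ n - u.length < v.length by omega),
            dif_neg (show ¬ n < (u ++ v).length by simp; omega)]
        congr 1; simp; omega

lemma im_wappend (u : List Γ) (β : Word Γ) : im (wappend u β) = im β := by
  cases β with
  | inl w => rfl
  | inr f =>
    ext a
    simp only [wappend, im, Set.mem_setOf_eq]
    constructor
    · intro h n
      obtain ⟨m, hm, he⟩ := h (n + u.length)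
      rw [dif_neg (by omega)] at he
      exact ⟨m - u.length, by omega, he⟩
    · intro h n
      obtain ⟨m, hm, he⟩ := h n
      refine ⟨m + u.length, by omega, ?_⟩
      rw [dif_neg (by omega)]
      simpa using he

lemma im_subset_alph (α : Word Γ) : im α ⊆ alph α := by
  cases α with
  | inl w => simp [im]
  | inr f =>
    intro a ha
    obtain ⟨m, _, he⟩ := ha 0
    exact ⟨m, he⟩

lemma alph_wappend (u : List Γ) (β : Word Γ) :
    alph (wappend u β) = {a | a ∈ u} ∪ alph β := by
  cases β with
  | inl w => ext a; simp [wappend, alph]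
  | inr f =>
    ext a
    simp only [wappend, alph, Set.mem_setOf_eq, Set.mem_union]
    constructor
    · rintro ⟨n, hn⟩
      rcases lt_or_ge n u.length with h | h
      · rw [dif_pos h] at hn; exact Or.inl (hn ▸ List.get_mem u ⟨n, h⟩)
      · rw [dif_neg (by omega)] at hn; exact Or.inr ⟨n - u.length, hn⟩
    · rintro (h | ⟨n, hn⟩)
      · obtain ⟨i, hi⟩ := List.mem_iff_get.mp h
        exact ⟨i, by rw [dif_pos i.2]; exact hi⟩
      · exact ⟨n + u.length, by rw [dif_neg (by omega)]; simpa using hn⟩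

lemma alph_pref_subset (α : Word Γ) (n : ℕ) : {a | a ∈ pref α n} ⊆ alph α := by
  cases α with
  | inl w => intro a ha; exact List.take_subset n w ha
  | inr f =>
    intro a ha
    simp only [pref, List.mem_map, List.mem_range] at ha
    obtain ⟨i, _, hi⟩ := ha
    exact ⟨i, hi⟩

lemma pref_wappend (u : List Γ) (β : Word Γ) (n : ℕ) (h : u.length ≤ n) :
    pref (wappend u β) n = u ++ pref β (n - u.length) := by
  cases β with
  | inl w =>
    simp only [wappend, pref]
    rw [List.take_append, List.take_of_length_le h]
  | inr f =>
    simp only [wappend, pref]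
    apply List.ext_getElem
    · simp; omega
    · intro i h1 h2
      simp only [List.getElem_map, List.getElem_range]
      rcases lt_or_ge i u.length with hi | hi
      · rw [dif_pos hi, List.getElem_append_left hi]; rfl
      · rw [dif_neg (by omega), List.getElem_append_right hi]
        simp

lemma exists_canon [Fintype Γ] (A : Set Γ) : ∃ β : Word Γ, im β = A ∧ alph β ⊆ A := by
  rcases A.eq_empty_or_nonempty with rfl | ⟨a, ha⟩
  · exact ⟨Sum.inl [], rfl, by simp [alph]⟩
  · haveI : Nonempty A := ⟨⟨a, ha⟩⟩
    obtain ⟨e, he⟩ := exists_surjective_nat A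
    refine ⟨Sum.inr (fun n => (e n.unpair.1 : Γ)), ?_, ?_⟩
    · ext b
      simp only [im, Set.mem_setOf_eq]
      constructor
      · intro h
        obtain ⟨m, _, hm⟩ := h 0
        exact hm ▸ (e _).2
      · intro hb n
        obtain ⟨k, hk⟩ := he ⟨b, hb⟩
        refine ⟨Nat.pair k n, Nat.right_le_pair k n, ?_⟩
        simp [Nat.unpair_pair, hk]
    · rintro b ⟨n, hn⟩
      exact hn ▸ (e _).2

lemma notMem_im_eq (a : Γ) :
    {α : Word Γ | a ∉ im α} = ⋃ u : List Γ, cone u {b | b ≠ a} := by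
  ext α
  simp only [Set.mem_iUnion, Set.mem_setOf_eq]
  constructor
  · intro h
    cases α with
    | inl w =>
      exact ⟨w, Sum.inl [], by simp [infin, alph], by simp [wappend]⟩
    | inr f =>
      have hex : ∃ n, ∀ m, n ≤ m → f m ≠ a := by
        by_contra hc
        push_neg at hc
        exact h (fun n => hc n)
      obtain ⟨n, hn⟩ := hex
      refine ⟨(List.range n).map f, Sum.inr (fun k => f (k + n)), ?_, ?_⟩
      · rintro c ⟨k, hk⟩
        exact hk ▸ hn (k + n) (by omega)
      · simp only [wappend]
        congr 1; funext m
        rcases lt_or_ge m ((List.range n).map f).length with hm | hm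
        · rw [dif_pos hm]; simp
        · rw [dif_neg (by omega)]
          congr 1; simp at hm ⊢; omega
  · rintro ⟨u, β, hβ, rfl⟩ him
    rw [im_wappend] at him
    exact (hβ (im_subset_alph β him)) rfl

lemma cone_isOpen (u : List Γ) (C : Set Γ) : IsOpen (cone u C) :=
  TopologicalSpace.GenerateOpen.basic _ ⟨u, C, rfl⟩

end InfWords

open InfWords in
theorem closure_imSet (Γ : Type) [Fintype Γ] (A : Set Γ) :
    closure (InfWords.imSet A) = ⋃ (B : Set Γ) (_ : A ⊆ B), InfWords.imSet B := by
  have hRHS : (⋃ (B : Set Γ) (_ : A ⊆ B), InfWords.imSet B) = {α : Word Γ | A ⊆ im α} := by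
    ext α
    simp only [Set.mem_iUnion, Set.mem_setOf_eq]
    constructor
    · rintro ⟨B, hAB, hB⟩
      have hB' : im α = B := hB
      exact hB' ▸ hAB
    · intro h
      exact ⟨im α, h, rfl⟩
  rw [hRHS]
  apply subset_antisymm
  · apply closure_minimal
    · intro α h
      have h' : im α = A := h
      show A ⊆ im α
      rw [h']
    · rw [← isOpen_compl_iff]
      have hc : {α : Word Γ | A ⊆ im α}ᶜ = ⋃ a ∈ A, {α : Word Γ | a ∉ im α} := by
        ext α
        simp only [Set.mem_compl_iff, Set.mem_setOf_eq, Set.mem_iUnion, Set.subset_def]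
        push_neg
        tauto
      rw [hc]
      refine isOpen_biUnion fun a _ => ?_
      rw [notMem_im_eq]
      exact isOpen_iUnion fun u => cone_isOpen u _
  · intro α hα
    obtain ⟨ω, hωim, hωal⟩ := exists_canon A
    rw [mem_closure_iff]
    intro o ho hao
    have key : ∀ o : Set (Word Γ), IsOpen o → ∀ α ∈ o, A ⊆ im α →
        ∃ N, ∀ n, N ≤ n → wappend (pref α n) ω ∈ o := by
      intro o ho
      change TopologicalSpace.GenerateOpen _ o at ho
      induction ho with
      | basic s hs =>
        obtain ⟨u, C, rfl⟩ := hs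
        rintro α ⟨β, hβ, rfl⟩ hA
        refine ⟨u.length, fun n hn => ?_⟩
        rw [pref_wappend u β n hn, wappend_wappend]
        refine ⟨wappend (pref β (n - u.length)) ω, ?_, rfl⟩
        have hAC : A ⊆ C := by
          intro x hx
          have := hA hx
          rw [im_wappend] at this
          exact hβ (im_subset_alph β this)
        intro c hc
        rw [alph_wappend] at hc
        rcases hc with hc | hc
        · exact hβ (alph_pref_subset β _ hc)
        · exact hAC (hωal hc)
      | univ => exact fun α _ _ => ⟨0, fun n _ => trivial⟩
      | inter s t _ _ ihs iht =>
        intro α hα hA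
        obtain ⟨Ns, hNs⟩ := ihs α hα.1 hA
        obtain ⟨Nt, hNt⟩ := iht α hα.2 hA
        exact ⟨max Ns Nt, fun n hn =>
          ⟨hNs n (le_trans (le_max_left _ _) hn), hNt n (le_trans (le_max_right _ _) hn)⟩⟩
      | sUnion S hS ih =>
        rintro α ⟨t, htS, hαt⟩ hA
        obtain ⟨N, hN⟩ := ih t htS α hαt hA
        exact ⟨N, fun n hn => ⟨t, htS, hN n hn⟩⟩
    obtain ⟨N, hN⟩ := key o ho α hao hα
    refine ⟨wappend (pref α N) ω, hN N le_rfl, ?_⟩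
    simp only [imSet, Set.mem_setOf_eq]
    rw [im_wappend, hωim]
end

section
/- Every monomial A₁*a₁ ⋯ A_k*a_k A_{k+1}^∞ is open in the alphabetic topology on Γ^∞. -/
theorem monomial_isOpen (Γ : Type) [Fintype Γ] (l : List (Set Γ × Γ)) (B : Set Γ) :
    IsOpen (InfWords.monomial l B) := by
  rw [isOpen_iff_forall_mem_open]
  rintro α ⟨us, β, hlen, hmem, hβ, rfl⟩
  refine ⟨InfWords.cone (InfWords.glue us l) B, ?_, ?_, ?_⟩
  · rintro x ⟨β', hβ', rfl⟩
    exact ⟨us, β', hlen, hmem, hβ', rfl⟩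
  · exact TopologicalSpace.GenerateOpen.basic _ ⟨_, _, rfl⟩
  · exact ⟨β, hβ, rfl⟩
end

section
/- Let M be a finite monoid generated by a set Γ. If for every idempotent e ∈ M and every generator a ∈ Γ with e ∈ MaM one has eae = e, then for every idempotent e ∈ M and every s ∈ M_e one has ese = e (i.e., M ∈ DA). Here M_e is the submonoid of M generated by {t ∈ M : e ∈ MtM}. -/
theorem da_test_on_generators (M : Type) [Monoid M] [Finite M] (Γ : Set M)
    (hgen : Submonoid.closure Γ = ⊤)
    (hyp : ∀ e : M, e * e = e → ∀ a ∈ Γ, (∃ x y, x * a * y = e) → e * a * e = e) :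
    ∀ e : M, e * e = e → ∀ s ∈ InfWords.Msub e, e * s * e = e := by

  intro e he s hs
  set S : Set M := {a | a ∈ Γ ∧ ∃ x y, x * a * y = e} with hSdef
  -- Step 1: every factor of e is in the closure of S
  have h1 : ∀ t ∈ Submonoid.closure Γ, ∀ x y : M, x * t * y = e → t ∈ Submonoid.closure S := by
    intro t ht
    induction ht using Submonoid.closure_induction with
    | mem a ha => exact fun x y hxy => Submonoid.subset_closure ⟨ha, x, y, hxy⟩
    | one => exact fun _ _ _ => Submonoid.one_mem _
    | mul u v hu hv ihu ihv =>
      intro x y hxy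
      have hu' : u ∈ Submonoid.closure S := ihu x (v * y) (by
        rw [show x * u * (v * y) = x * (u * v) * y by simp only [mul_assoc], hxy])
      have hv' : v ∈ Submonoid.closure S := ihv (x * u) y (by
        rw [show x * u * v * y = x * (u * v) * y by simp only [mul_assoc], hxy])
      exact Submonoid.mul_mem _ hu' hv'
  -- Step 2: key induction
  have key : ∀ t ∈ Submonoid.closure S, ∀ f : M, f * f = f →
      (∀ a ∈ S, ∃ x y, x * a * y = f) → f * t * f = f := by
    intro t ht
    induction ht using Submonoid.closure_induction with
    | mem a ha =>
      intro f hf hfac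
      exact hyp f hf a ha.1 (hfac a ha)
    | one => intro f hf _; simpa using hf
    | mul u v hu hv ihu ihv =>
      intro f hf hfac
      have hfu : f * u * f = f := ihu f hf hfac
      have hg : (f * u) * (f * u) = f * u := by
        rw [← mul_assoc, hfu]
      have hfacg : ∀ a ∈ S, ∃ x y, x * a * y = f * u := by
        intro a ha
        obtain ⟨x, y, hxy⟩ := hfac a ha
        exact ⟨x, y * (f * u), by
          rw [show x * a * (y * (f * u)) = (x * a * y) * (f * u) by simp only [mul_assoc],
            hxy, ← mul_assoc, hf]⟩
      have hgv : (f * u) * v * (f * u) = f * u := ihv (f * u) hg hfacg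
      calc f * (u * v) * f = (f * u) * v * ((f * u) * f) := by
            rw [hfu]; simp only [mul_assoc]
        _ = ((f * u) * v * (f * u)) * f := by simp only [mul_assoc]
        _ = (f * u) * f := by rw [hgv]
        _ = f := hfu
  -- Conclude
  have hsS : s ∈ Submonoid.closure S := by
    have : InfWords.Msub e ≤ Submonoid.closure S := by
      rw [InfWords.Msub, Submonoid.closure_le]
      rintro t ⟨x, y, hxy⟩
      exact h1 t (by rw [hgen]; trivial) x y hxy
    exact this hs
  exact key s hsS e he (fun a ha => ha.2)
end
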